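/- Let C(α,β) = α⁵ − 2α⁴ + α³(β+1) − α²β − β⁵ + β⁴ and β₀ = 1/2 + √5/10. Then: (i) C(β,β) = 0 for every real β; (ii) β₀ is the unique β ∈ (1/2,1) with ∂_α C(β,β) = 0, and both first partial derivatives of C vanish at (β₀,β₀); (iii) if ε > 0 and Ψ : (β₀−ε, β₀+ε) → ℝ is differentiable at β₀ with Ψ(β₀) = β₀ and C(α, Ψ(α)) = 0 for all α ∈ (β₀−ε, β₀+ε), then Ψ′(β₀) = 1 or Ψ′(β₀) = −(√5+3)/(2√5+2). In particular, since −(√5+3)/(2√5+2) ≠ −1, the implicitly defined zero-level curve of C transversal to the diagonal is not orthogonal to the diagonal at (β₀,β₀). -/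

import Mathlib

/-- The polynomial coming from the kneading sequence `RLLRC`. -/
noncomputable def Cpoly (a b : ℝ) : ℝ :=
  a ^ 5 - 2 * a ^ 4 + a ^ 3 * (b + 1) - a ^ 2 * b - b ^ 5 + b ^ 4

noncomputable def beta0 : ℝ := 1 / 2 + Real.sqrt 5 / 10


lemma hCa (b x : ℝ) :
    HasDerivAt (fun a => Cpoly a b) (5*x^4 - 8*x^3 + 3*x^2*(b+1) - 2*x*b) x := by
  have h := (((((hasDerivAt_pow 5 x).sub ((hasDerivAt_pow 4 x).const_mul 2)).add
      ((hasDerivAt_pow 3 x).mul_const (b+1))).sub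
      ((hasDerivAt_pow 2 x).mul_const b)).sub_const (b^5)).add_const (b^4)
  unfold Cpoly
  refine (h.congr_deriv (by push_cast; ring)).congr_of_eventuallyEq (Filter.Eventually.of_forall fun y => ?_)
  simp only [Pi.sub_apply, Pi.add_apply]

lemma hCb (a x : ℝ) :
    HasDerivAt (fun b => Cpoly a b) (a^3 - a^2 - 5*x^4 + 4*x^3) x := by
  have h1 : HasDerivAt (fun b : ℝ => a^3 * (b+1)) (a^3 * 1) x :=
    ((hasDerivAt_id x).add_const 1).const_mul (a^3)
  have h2 : HasDerivAt (fun b : ℝ => a^2 * b) (a^2 * 1) x :=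
    (hasDerivAt_id x).const_mul (a^2)
  have h := (((h1.const_add (a^5 - 2*a^4)).sub h2).sub (hasDerivAt_pow 5 x)).add
      (hasDerivAt_pow 4 x)
  unfold Cpoly
  refine (h.congr_deriv (by push_cast; ring)).congr_of_eventuallyEq (Filter.Eventually.of_forall fun y => ?_)
  simp only [Pi.sub_apply, Pi.add_apply]

noncomputable def qA (x y : ℝ) : ℝ :=
  (10*beta0^3 - 9*beta0^2 + 2*beta0) + (10*beta0^2 - 7*beta0 + 1)*(x - beta0)
    + (5*beta0 - 2)*(x - beta0)^2 + (x - beta0)^3 + (3*beta0 - 1)*(y - beta0)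
    + (x - beta0)*(y - beta0)

noncomputable def qD (y : ℝ) : ℝ :=
  (6*beta0^2 - 10*beta0^3) + (4*beta0 - 10*beta0^2)*(y - beta0)
    + (1 - 5*beta0)*(y - beta0)^2 - (y - beta0)^3

lemma keyid (hp : 5*beta0^2 - 5*beta0 + 1 = 0) (x y : ℝ) :
    Cpoly x y = (x - beta0)^2 * qA x y
      + (x - beta0)*(y - beta0)*(3*beta0^2 - 2*beta0) + (y - beta0)^2 * qD y := by
  unfold Cpoly qA qD
  linear_combination (beta0^2 * (x - y)) * hp

lemma hp5 : 5*beta0^2 - 5*beta0 + 1 = 0 := by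
  have hs : Real.sqrt 5 ^ 2 = 5 := Real.sq_sqrt (by norm_num)
  unfold beta0
  linear_combination hs / 20

lemma beta0_mem : beta0 ∈ Set.Ioo (1 / 2 : ℝ) 1 := by
  have hs : Real.sqrt 5 ^ 2 = 5 := Real.sq_sqrt (by norm_num)
  have h0 : 0 < Real.sqrt 5 := Real.sqrt_pos.mpr (by norm_num)
  constructor
  · unfold beta0; linarith
  · unfold beta0; nlinarith


/-- (i) `C` vanishes on the diagonal; (ii) `β₀ = 1/2 + √5/10` is the unique `β ∈ (1/2,1)`
with `∂_α C(β,β) = 0`, and both first partials of `C` vanish at `(β₀,β₀)`;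
(iii) any curve `(α, Ψ(α))` in the zero set of `C` through `(β₀,β₀)`, differentiable at `β₀`,
has slope `1` or `-(√5+3)/(2√5+2)` there; moreover `-(√5+3)/(2√5+2) ≠ -1`, so the curve
transversal to the diagonal is not orthogonal to it. -/
theorem stmt3 :
    (∀ b : ℝ, Cpoly b b = 0) ∧
    beta0 ∈ Set.Ioo (1 / 2 : ℝ) 1 ∧
    (∀ b ∈ Set.Ioo (1 / 2 : ℝ) 1, (deriv (fun a => Cpoly a b) b = 0 ↔ b = beta0)) ∧
    deriv (fun a => Cpoly a beta0) beta0 = 0 ∧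
    deriv (fun b => Cpoly beta0 b) beta0 = 0 ∧
    (∀ ε > (0 : ℝ), ∀ Ψ : ℝ → ℝ, DifferentiableAt ℝ Ψ beta0 → Ψ beta0 = beta0 →
      (∀ a ∈ Set.Ioo (beta0 - ε) (beta0 + ε), Cpoly a (Ψ a) = 0) →
      deriv Ψ beta0 = 1 ∨ deriv Ψ beta0 = -((Real.sqrt 5 + 3) / (2 * Real.sqrt 5 + 2))) ∧
    -((Real.sqrt 5 + 3) / (2 * Real.sqrt 5 + 2)) ≠ -1 := by
  have hs : Real.sqrt 5 ^ 2 = 5 := Real.sq_sqrt (by norm_num)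
  have hs0 : 0 < Real.sqrt 5 := Real.sqrt_pos.mpr (by norm_num)
  refine ⟨?_, beta0_mem, ?_, ?_, ?_, ?_, ?_⟩
  · intro b; unfold Cpoly; ring
  · -- uniqueness of the critical point
    intro b hb
    rw [(hCa b b).deriv]
    constructor
    · intro h
      have hq : b^2 * (5*b^2 - 5*b + 1) = 0 := by linear_combination h
      have hb2 : b^2 ≠ 0 := pow_ne_zero 2 (by linarith [hb.1])
      have hq' : 5*b^2 - 5*b + 1 = 0 := by
        rcases mul_eq_zero.mp hq with h' | h'
        · exact absurd h' hb2
        · exact h'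
      have hfac : (b - beta0) * (5*(b + beta0) - 5) = 0 := by
        linear_combination hq' - hp5
      rcases mul_eq_zero.mp hfac with h' | h'
      · linarith [sub_eq_zero.mp h']
      · exfalso
        have h1 : (1/2 : ℝ) < beta0 := beta0_mem.1
        linarith [hb.1]
    · rintro rfl
      linear_combination beta0^2 * hp5
  · rw [(hCa beta0 beta0).deriv]
    linear_combination beta0^2 * hp5
  · rw [(hCb beta0 beta0).deriv]
    linear_combination (-beta0^2) * hp5
  · -- part (iii)
    intro ε hε Ψ hdiff hfix hzero
    set m := deriv Ψ beta0 with hm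
    have hΨ : HasDerivAt Ψ m beta0 := hdiff.hasDerivAt
    have hcont : ContinuousAt Ψ beta0 := hdiff.continuousAt
    -- slope tendsto
    have hsl : Filter.Tendsto (fun a => (Ψ a - beta0)/(a - beta0)) (nhdsWithin beta0 {beta0}ᶜ)
        (nhds m) := by
      have h := hasDerivAt_iff_tendsto_slope.mp hΨ
      refine h.congr fun a => ?_
      simp [slope_def_field, hfix]
    set sl : ℝ → ℝ := fun a => (Ψ a - beta0)/(a - beta0) with hsldef
    set G : ℝ → ℝ := fun a => qA a (Ψ a) + sl a * (3*beta0^2 - 2*beta0) + sl a * sl a * qD (Ψ a)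
      with hGdef
    have hΨt : Filter.Tendsto Ψ (nhds beta0) (nhds beta0) := by
      simpa [hfix] using hcont.tendsto
    have hAcont : ContinuousAt (fun a => qA a (Ψ a)) beta0 := by
      unfold qA; fun_prop
    have hDcont : ContinuousAt (fun a => qD (Ψ a)) beta0 := by
      unfold qD; fun_prop
    have hGlim : Filter.Tendsto G (nhdsWithin beta0 {beta0}ᶜ)
        (nhds (qA beta0 beta0 + m * (3*beta0^2 - 2*beta0) + m * m * qD beta0)) := by
      have hle : nhdsWithin beta0 {beta0}ᶜ ≤ nhds beta0 := nhdsWithin_le_nhds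
      have h1 := hAcont.tendsto.mono_left hle
      have h2 := hDcont.tendsto.mono_left hle
      have hΨ0 : Ψ beta0 = beta0 := hfix
      rw [hGdef]
      have := (h1.add (hsl.mul_const (3*beta0^2 - 2*beta0))).add ((hsl.mul hsl).mul h2)
      simpa [hΨ0] using this
    have hG0 : ∀ᶠ a in nhdsWithin beta0 {beta0}ᶜ, G a = 0 := by
      have hIoo : Set.Ioo (beta0 - ε) (beta0 + ε) ∈ nhds beta0 :=
        Ioo_mem_nhds (by linarith) (by linarith)
      filter_upwards [self_mem_nhdsWithin, mem_nhdsWithin_of_mem_nhds hIoo] with a ha hmem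
      have hane : a ≠ beta0 := ha
      have hne : a - beta0 ≠ 0 := sub_ne_zero.mpr hane
      have h0 := hzero a hmem
      rw [keyid hp5 a (Ψ a)] at h0
      have hGa : (a - beta0)^2 * G a = (a - beta0)^2 * qA a (Ψ a)
          + (a - beta0)*(Ψ a - beta0)*(3*beta0^2 - 2*beta0) + (Ψ a - beta0)^2 * qD (Ψ a) := by
        rw [hGdef, hsldef]
        field_simp
      have hz : (a - beta0)^2 * G a = 0 := hGa.trans h0
      have h2 : (a - beta0)^2 ≠ 0 := pow_ne_zero 2 hne
      exact (mul_eq_zero.mp hz).resolve_left h2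
    have hGzero : Filter.Tendsto G (nhdsWithin beta0 {beta0}ᶜ) (nhds 0) :=
      Filter.Tendsto.congr' (hG0.mono fun a ha => ha.symm) tendsto_const_nhds
    have hquad : qA beta0 beta0 + m * (3*beta0^2 - 2*beta0) + m * m * qD beta0 = 0 :=
      tendsto_nhds_unique hGlim hGzero
    have hquad' : (10*beta0^3 - 9*beta0^2 + 2*beta0) + m * (3*beta0^2 - 2*beta0)
        + m * m * (6*beta0^2 - 10*beta0^3) = 0 := by
      have := hquad
      unfold qA qD at this
      linear_combination this
    have hfact : (m - 1) * ((2*beta0 - 4/5)*m + (beta0 - 1/5)) = 0 := by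
      linear_combination -hquad' + ((2*beta0 + 1/5) + (3/5)*m - (2*beta0 + 4/5)*m*m) * hp5
    rcases mul_eq_zero.mp hfact with h' | h'
    · left; linarith [sub_eq_zero.mp h']
    · right
      have hb : beta0 = 1/2 + Real.sqrt 5/10 := rfl
      rw [hb] at h'
      have hkey : m * (2*Real.sqrt 5 + 2) = -(Real.sqrt 5 + 3) := by
        linear_combination 10 * h'
      have hden : 2*Real.sqrt 5 + 2 ≠ 0 := by positivity
      field_simp
      linear_combination hkey
  · intro h
    have hden : 2*Real.sqrt 5 + 2 ≠ 0 := by positivity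
    rw [neg_eq_iff_eq_neg, neg_neg, div_eq_one_iff_eq hden] at h
    nlinarith
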